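/- Let K be a number field of degree N over ℚ having at least one real embedding, with ring of integers 𝒪, and let σ_1, …, σ_N : K → ℂ be the N distinct field embeddings of K into ℂ. Let d_1, …, d_N ∈ ℤ be integers such that σ_1(u)^{d_1} · σ_2(u)^{d_2} ⋯ σ_N(u)^{d_N} = 1 for every norm-1 unit u ∈ 𝒪_1^×. Then d_1 = d_2 = ⋯ = d_N. -/

import Mathlib

open NumberField

variable {K : Type} [Field K] [NumberField K]

private def IsRel (e : (K →+* ℂ) → ℤ) : Prop :=
  ∀ u : (𝓞 K)ˣ, Algebra.norm ℚ (algebraMap (𝓞 K) K u) = 1 →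
    ∏ σ : K →+* ℂ, σ (algebraMap (𝓞 K) K u) ^ e σ = 1

private lemma prod_emb (x : K) :
    ∏ σ : K →+* ℂ, σ x = algebraMap ℚ ℂ (Algebra.norm ℚ x) := by
  rw [Algebra.norm_eq_prod_embeddings]
  exact Fintype.prod_equiv (RingHom.equivRatAlgHom K ℂ) (fun σ : K →+* ℂ => σ x)
    (fun φ : K →ₐ[ℚ] ℂ => φ x) (fun σ => rfl)

private lemma sumlog {x : K} (hx : x ≠ 0) (e : (K →+* ℂ) → ℤ)
    (hrel : ∏ σ : K →+* ℂ, σ x ^ e σ = 1) :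
    ∑ σ : K →+* ℂ, (e σ : ℝ) * Real.log (‖σ x‖) = 0 := by
  have h0 : ∀ σ : K →+* ℂ, ‖σ x‖ ≠ 0 := fun σ => by
    simpa using (map_ne_zero σ).mpr hx
  have h1 : ∏ σ : K →+* ℂ, ‖σ x‖ ^ e σ = 1 := by
    rw [← norm_one (α := ℂ), ← hrel, norm_prod]
    exact Finset.prod_congr rfl fun σ _ => (norm_zpow _ _).symm
  have h2 := congrArg Real.log h1
  rw [Real.log_prod (fun σ _ => zpow_ne_zero _ (h0 σ)), Real.log_one] at h2
  rw [← h2]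
  exact Finset.sum_congr rfl fun σ _ => (Real.log_zpow _ _).symm

private lemma sumlog_units {x : K} (hx : x ≠ 0) (hn : Algebra.norm ℚ x = 1) :
    ∑ σ : K →+* ℂ, Real.log (‖σ x‖) = 0 := by
  have h1 : ∏ σ : K →+* ℂ, σ x ^ (1 : ℤ) = 1 := by
    simp only [zpow_one]
    rw [prod_emb x, hn, map_one]
  simpa using sumlog hx (fun _ => 1) h1

private lemma norm_sq_one (u : (𝓞 K)ˣ) :
    Algebra.norm ℚ (algebraMap (𝓞 K) K ((u * u : (𝓞 K)ˣ) : 𝓞 K)) = 1 := by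
  have h : |Algebra.norm ℚ (algebraMap (𝓞 K) K (u : 𝓞 K))| = 1 := by
    simpa using NumberField.isUnit_iff_norm.mp u.isUnit
  have hxx : algebraMap (𝓞 K) K ((u * u : (𝓞 K)ˣ) : 𝓞 K)
      = algebraMap (𝓞 K) K (u : 𝓞 K) * algebraMap (𝓞 K) K (u : 𝓞 K) := by
    rw [Units.val_mul, map_mul]
  rw [hxx, map_mul, ← sq, ← sq_abs, h, one_pow]

private lemma coe_unit_ne_zero (u : (𝓞 K)ˣ) : algebraMap (𝓞 K) K (u : 𝓞 K) ≠ 0 :=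
  (u.isUnit.map (algebraMap (𝓞 K) K)).ne_zero

private lemma lemA {e : (K →+* ℂ) → ℤ} (he : IsRel e) {σ₀ : K →+* ℂ}
    (h0 : ComplexEmbedding.IsReal σ₀) (σ : K →+* ℂ) :
    e σ + e (ComplexEmbedding.conjugate σ) = 2 * e σ₀ := by
  classical
  set s : (K →+* ℂ) → ℤ := fun τ => e τ + e (ComplexEmbedding.conjugate τ) with hs
  have hinv : Function.Involutive (fun τ : K →+* ℂ => ComplexEmbedding.conjugate τ) :=
    fun τ => star_star τ
  have hsC : ∀ τ, s (ComplexEmbedding.conjugate τ) = s τ := by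
    intro τ
    simp only [hs, hinv τ]
    ring
  suffices H : ∀ τ, s τ = s σ₀ by
    have := H σ
    rw [hs] at this
    simp only at this
    rw [this, NumberField.ComplexEmbedding.isReal_iff.mp h0]
    ring
  -- log relation for s
  have Hlog : ∀ u : (𝓞 K)ˣ, Algebra.norm ℚ (algebraMap (𝓞 K) K u) = 1 →
      ∑ τ : K →+* ℂ, (s τ : ℝ) * Real.log (‖τ (algebraMap (𝓞 K) K u)‖) = 0 := by
    intro u hu
    have h1 := sumlog (coe_unit_ne_zero u) e (he u hu)
    have h2 : ∑ τ : K →+* ℂ, (e (ComplexEmbedding.conjugate τ) : ℝ) *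
        Real.log (‖τ (algebraMap (𝓞 K) K u)‖) = 0 := by
      have := Equiv.sum_comp (Function.Involutive.toPerm _ hinv) (fun τ : K →+* ℂ =>
        (e τ : ℝ) * Real.log (‖τ (algebraMap (𝓞 K) K u)‖))
      rw [h1] at this
      rw [← this]
      refine Finset.sum_congr rfl fun τ _ => ?_
      have habs : ‖((Function.Involutive.toPerm _ hinv) τ) (algebraMap (𝓞 K) K u)‖
          = ‖τ (algebraMap (𝓞 K) K u)‖ := by
        show ‖(ComplexEmbedding.conjugate τ) _‖ = _
        rw [ComplexEmbedding.conjugate_coe_eq, Complex.norm_conj]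
      rw [habs]
      rfl
    have h3 := congrArg₂ (· + ·) h1 h2
    simp only [← Finset.sum_add_distrib, add_zero] at h3
    rw [← h3]
    refine Finset.sum_congr rfl fun τ _ => ?_
    simp only [hs]
    push_cast
    ring
  -- choose maximizer
  obtain ⟨σs, -, hmax⟩ := Finset.exists_max_image (Finset.univ : Finset (K →+* ℂ)) s
    ⟨σ₀, Finset.mem_univ σ₀⟩
  obtain ⟨u, hu⟩ := NumberField.Units.dirichletUnitTheorem.exists_unit (K := K) (InfinitePlace.mk σs)
  set X : K := algebraMap (𝓞 K) K ((u * u : (𝓞 K)ˣ) : 𝓞 K) with hX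
  have hXne : X ≠ 0 := coe_unit_ne_zero (u * u)
  have hXnorm := norm_sq_one u
  have hXlog : ∀ τ : K →+* ℂ, InfinitePlace.mk τ ≠ InfinitePlace.mk σs →
      Real.log (‖τ X‖) < 0 := by
    intro τ hτ
    have h4 := hu (InfinitePlace.mk τ) hτ
    have hXx : X = algebraMap (𝓞 K) K (u : 𝓞 K) * algebraMap (𝓞 K) K (u : 𝓞 K) := by
      rw [hX, Units.val_mul, map_mul]
    have : ‖τ X‖ = (InfinitePlace.mk τ) X := rfl
    rw [this, hXx, map_mul, Real.log_mul (by
        exact ne_of_gt (InfinitePlace.pos_iff.mpr (coe_unit_ne_zero u))) (by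
        exact ne_of_gt (InfinitePlace.pos_iff.mpr (coe_unit_ne_zero u)))]
    have : (InfinitePlace.mk τ) (algebraMap (𝓞 K) K (u : 𝓞 K)) = (InfinitePlace.mk τ) (u : K) := rfl
    linarith [h4]
  -- the sum with constant s σs
  have hconst : ∑ τ : K →+* ℂ, (s σs : ℝ) * Real.log (‖τ X‖) = 0 := by
    rw [← Finset.mul_sum, sumlog_units hXne hXnorm, mul_zero]
  have hmain := Hlog (u * u) hXnorm
  rw [← hX] at hmain
  have hdiff : ∑ τ : K →+* ℂ, ((s τ : ℝ) - (s σs : ℝ)) * Real.log (‖τ X‖) = 0 := by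
    have := congrArg₂ (· - ·) hmain hconst
    simp only [← Finset.sum_sub_distrib, sub_zero] at this
    rw [← this]
    refine Finset.sum_congr rfl fun τ _ => ?_
    ring
  have hterm : ∀ τ ∈ (Finset.univ : Finset (K →+* ℂ)),
      0 ≤ ((s τ : ℝ) - (s σs : ℝ)) * Real.log (‖τ X‖) := by
    intro τ _
    by_cases hcase : InfinitePlace.mk τ = InfinitePlace.mk σs
    · rcases InfinitePlace.mk_eq_iff.mp hcase with h | h
      · rw [h]; simp
      · rw [← h, hsC]; simp
    · have h5 := hXlog τ hcase
      have h6 : (s τ : ℝ) ≤ (s σs : ℝ) := by exact_mod_cast hmax τ (Finset.mem_univ τ)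
      nlinarith
  have hzero := (Finset.sum_eq_zero_iff_of_nonneg hterm).mp hdiff
  have hall : ∀ τ : K →+* ℂ, s τ = s σs := by
    intro τ
    by_cases hcase : InfinitePlace.mk τ = InfinitePlace.mk σs
    · rcases InfinitePlace.mk_eq_iff.mp hcase with h | h
      · rw [h]
      · rw [← h, hsC]
    · have h5 := hXlog τ hcase
      have h7 := hzero τ (Finset.mem_univ τ)
      have h8 : (s τ : ℝ) - (s σs : ℝ) = 0 := by
        rcases mul_eq_zero.mp h7 with h | h
        · exact h
        · exact absurd h (ne_of_lt h5)
      have : (s τ : ℝ) = (s σs : ℝ) := by linarith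
      exact_mod_cast this
  intro τ'
  rw [hall τ', hall σ₀]

private def QRel (E : (K →+* AlgebraicClosure ℚ) → ℤ) : Prop :=
  ∀ u : (𝓞 K)ˣ, Algebra.norm ℚ (algebraMap (𝓞 K) K u) = 1 →
    ∏ s : K →+* AlgebraicClosure ℚ, s (algebraMap (𝓞 K) K u) ^ E s = 1

private noncomputable def Phi (j : AlgebraicClosure ℚ →+* ℂ) :
    (K →+* AlgebraicClosure ℚ) ≃ (K →+* ℂ) :=
  Equiv.ofBijective (fun s => j.comp s) (by
    rw [Fintype.bijective_iff_injective_and_card]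
    constructor
    · intro a b hab
      ext x
      exact j.injective (RingHom.congr_fun hab x)
    · rw [NumberField.Embeddings.card K (AlgebraicClosure ℚ), NumberField.Embeddings.card K ℂ])

private lemma qrel_of_isRel (j : AlgebraicClosure ℚ →+* ℂ) {e : (K →+* ℂ) → ℤ}
    (he : IsRel e) : QRel (K := K) (fun s => e (Phi (K := K) j s)) := by
  intro u hu
  apply j.injective
  rw [map_one, map_prod]
  have h1 : ∀ s : K →+* AlgebraicClosure ℚ,
      j (s (algebraMap (𝓞 K) K u) ^ e (Phi (K := K) j s))
        = (Phi (K := K) j s) (algebraMap (𝓞 K) K u) ^ e (Phi (K := K) j s) := by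
    intro s
    rw [map_zpow₀]
    rfl
  rw [Finset.prod_congr rfl fun s _ => h1 s]
  rw [Equiv.prod_comp (Phi (K := K) j) (fun σ : K →+* ℂ => σ (algebraMap (𝓞 K) K u) ^ e σ)]
  exact he u hu

private lemma isRel_of_qrel (j : AlgebraicClosure ℚ →+* ℂ) {E : (K →+* AlgebraicClosure ℚ) → ℤ}
    (hE : QRel (K := K) E) : IsRel (fun σ => E ((Phi (K := K) j).symm σ)) := by
  intro u hu
  rw [← Equiv.prod_comp (Phi (K := K) j)
    (fun σ : K →+* ℂ => σ (algebraMap (𝓞 K) K u) ^ E ((Phi (K := K) j).symm σ))]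
  simp only [Equiv.symm_apply_apply]
  have h1 : ∀ s : K →+* AlgebraicClosure ℚ,
      (Phi (K := K) j s) (algebraMap (𝓞 K) K u) ^ E s
        = j (s (algebraMap (𝓞 K) K u) ^ E s) := by
    intro s
    rw [map_zpow₀]
    rfl
  rw [Finset.prod_congr rfl fun s _ => h1 s, ← map_prod, hE u hu, map_one]

private lemma qrel_comp {E : (K →+* AlgebraicClosure ℚ) → ℤ} (hE : QRel (K := K) E)
    (g : AlgebraicClosure ℚ →+* AlgebraicClosure ℚ)
    (ψ : (K →+* AlgebraicClosure ℚ) ≃ (K →+* AlgebraicClosure ℚ))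
    (hψ : ∀ s, ψ s = g.comp s) : QRel (K := K) (fun s => E (ψ.symm s)) := by
  intro u hu
  rw [← Equiv.prod_comp ψ
    (fun s : K →+* AlgebraicClosure ℚ => s (algebraMap (𝓞 K) K u) ^ E (ψ.symm s))]
  simp only [Equiv.symm_apply_apply]
  have h1 : ∀ s : K →+* AlgebraicClosure ℚ,
      (ψ s) (algebraMap (𝓞 K) K u) ^ E s = g (s (algebraMap (𝓞 K) K u) ^ E s) := by
    intro s
    rw [map_zpow₀, hψ]
    rfl
  rw [Finset.prod_congr rfl fun s _ => h1 s, ← map_prod, hE u hu, map_one]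

private lemma exists_extend_general {F L1 L2 : Type*} [Field F] [Field L1] [Field L2]
    [IsAlgClosed L2] [Algebra F L1] [Algebra.IsAlgebraic F L1] (t : F →+* L2) :
    ∃ g : L1 →+* L2, ∀ x : F, g (algebraMap F L1 x) = t x := by
  letI : Algebra F L2 := t.toAlgebra
  haveI : NoZeroSMulDivisors F L1 :=
    inferInstance
  haveI : NoZeroSMulDivisors F L2 :=
    inferInstance
  let f : L1 →ₐ[F] L2 := IsAlgClosed.lift
  exact ⟨f.toRingHom, fun x => f.commutes x⟩

private lemma exists_extend (s t : K →+* AlgebraicClosure ℚ) :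
    ∃ g : AlgebraicClosure ℚ →+* AlgebraicClosure ℚ, ∀ x : K, g (s x) = t x := by
  letI : Algebra K (AlgebraicClosure ℚ) := s.toAlgebra
  haveI : IsScalarTower ℚ K (AlgebraicClosure ℚ) :=
    IsScalarTower.of_algebraMap_eq' (Subsingleton.elim _ _)
  haveI : Algebra.IsAlgebraic ℚ (AlgebraicClosure ℚ) := by
    convert AlgebraicClosure.isAlgebraic ℚ
    · rfl
    · exact Subsingleton.elim _ _
  haveI : Algebra.IsAlgebraic K (AlgebraicClosure ℚ) :=
    Algebra.IsAlgebraic.tower_top (K := ℚ) K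
  exact exists_extend_general t

/-- Let `K` be a number field with at least one real embedding.  If integers `d_σ`, indexed by
the field embeddings `σ : K → ℂ`, satisfy `∏_σ σ(u)^{d_σ} = 1` for every norm-one unit `u` of
`𝒪`, then all the `d_σ` are equal. -/
theorem unit_character_exponents_equal
    (K : Type) [Field K] [NumberField K]
    (hreal : ∃ σ : K →+* ℂ, ComplexEmbedding.IsReal σ)
    (d : (K →+* ℂ) → ℤ)
    (h : ∀ u : (𝓞 K)ˣ, Algebra.norm ℚ (algebraMap (𝓞 K) K u) = 1 →
      ∏ σ : K →+* ℂ, σ (algebraMap (𝓞 K) K u) ^ d σ = 1) :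
    ∀ σ τ : K →+* ℂ, d σ = d τ := by
  classical
  obtain ⟨σ₀, hσ₀⟩ := hreal
  have hd : IsRel d := h
  haveI : Algebra.IsAlgebraic ℚ (AlgebraicClosure ℚ) := by
    convert AlgebraicClosure.isAlgebraic ℚ
    · rfl
    · exact Subsingleton.elim _ _
  let j : AlgebraicClosure ℚ →+* ℂ :=
    (IsAlgClosed.lift : AlgebraicClosure ℚ →ₐ[ℚ] ℂ).toRingHom
  let Φ : (K →+* AlgebraicClosure ℚ) ≃ (K →+* ℂ) := Phi (K := K) j
  let D : (K →+* AlgebraicClosure ℚ) → ℤ := fun s => d (Φ s)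
  let s₀ : K →+* AlgebraicClosure ℚ := Φ.symm σ₀
  have hQ : QRel (K := K) D := qrel_of_isRel j hd
  have hDs₀ : D s₀ = d σ₀ := by
    simp only [D, s₀, Equiv.apply_symm_apply]
  -- key step
  have key : ∀ t : K →+* AlgebraicClosure ℚ, ∃ t', D t' - d σ₀ = 2 * (D t - d σ₀) := by
    intro t
    obtain ⟨g, hg⟩ := exists_extend t s₀
    have hginj : Function.Injective
        (fun s : K →+* AlgebraicClosure ℚ => g.comp s) := by
      intro a b hab
      ext x
      exact g.injective (RingHom.congr_fun hab x)
    have hgbij := Finite.injective_iff_bijective.mp hginj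
    let ψ := Equiv.ofBijective _ hgbij
    have hψ : ∀ s, ψ s = g.comp s := fun s => rfl
    have hQ2 : QRel (K := K) (fun s => D (ψ.symm s)) := qrel_comp hQ g ψ hψ
    have hrel2 : IsRel (fun σ => D (ψ.symm (Φ.symm σ))) := isRel_of_qrel j hQ2
    have hA := lemA hrel2 hσ₀ (Φ (ψ s₀))
    simp only [Equiv.symm_apply_apply] at hA
    have hψt : ψ.symm s₀ = t := by
      have : ψ t = s₀ := by
        rw [hψ]
        ext x
        exact hg x
      rw [← this, Equiv.symm_apply_apply]
    rw [hψt] at hA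
    refine ⟨ψ.symm (Φ.symm (ComplexEmbedding.conjugate (Φ (ψ s₀)))), ?_⟩
    rw [hDs₀] at hA
    omega
  -- iteration
  have iter : ∀ n : ℕ, ∀ t : K →+* AlgebraicClosure ℚ,
      ∃ t', D t' - d σ₀ = 2 ^ n * (D t - d σ₀) := by
    intro n
    induction n with
    | zero => exact fun t => ⟨t, by ring⟩
    | succ n ih =>
      intro t
      obtain ⟨t', ht'⟩ := ih t
      obtain ⟨t'', ht''⟩ := key t'
      exact ⟨t'', by rw [ht'', ht']; ring⟩
  -- boundedness forces zero
  have hzero : ∀ t : K →+* AlgebraicClosure ℚ, D t = d σ₀ := by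
    intro t
    by_contra hne
    set M : ℕ := Finset.univ.sup (fun s : K →+* AlgebraicClosure ℚ => (D s - d σ₀).natAbs)
      with hM
    obtain ⟨t', ht'⟩ := iter (M + 1) t
    have h1 : (D t' - d σ₀).natAbs = 2 ^ (M + 1) * (D t - d σ₀).natAbs := by
      rw [ht', Int.natAbs_mul, Int.natAbs_pow]
      rfl
    have h2 : 1 ≤ (D t - d σ₀).natAbs := by
      rcases Nat.eq_zero_or_pos (D t - d σ₀).natAbs with h | h
      · exact absurd (by omega : D t = d σ₀) hne
      · exact h
    have h3 : (D t' - d σ₀).natAbs ≤ M := Finset.le_sup (f := fun s : K →+* AlgebraicClosure ℚ => (D s - d σ₀).natAbs) (Finset.mem_univ t')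
    have h4 : M < 2 ^ M := Nat.lt_two_pow_self
    have h5 : 2 ^ (M + 1) ≤ (D t' - d σ₀).natAbs := by
      calc 2 ^ (M + 1) = 2 ^ (M + 1) * 1 := by ring
      _ ≤ 2 ^ (M + 1) * (D t - d σ₀).natAbs := Nat.mul_le_mul_left _ h2
      _ = (D t' - d σ₀).natAbs := h1.symm
    have h6 : 2 ^ M < 2 ^ (M + 1) := by
      exact Nat.pow_lt_pow_right (by norm_num) (Nat.lt_succ_self M)
    omega
  intro σ τ
  have hσ : d σ = d σ₀ := by
    have := hzero (Φ.symm σ)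
    simpa only [D, Equiv.apply_symm_apply] using this
  have hτ : d τ = d σ₀ := by
    have := hzero (Φ.symm τ)
    simpa only [D, Equiv.apply_symm_apply] using this
  rw [hσ, hτ]
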